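/- Let p ≥ 5 be a prime and G a group of order p^5 such that (G, Z(G)) is a Camina pair, |Z(G)| = p, and G' is elementary abelian of order p³ (as holds for the groups of order p^5 in the isoclinism family Φ10). Let μ be a nontrivial complex character of Z(G) and let ψ be any linear character of G' with ψ|_{Z(G)} = μ. Then the induced class function ψ^G is an irreducible complex character of G of degree p² satisfying ψ^G(g) = p²·μ(g) for g ∈ Z(G) and ψ^G(g) = 0 for g ∉ Z(G), and moreover ℚ(ψ) = ℚ(ψ^G) = ℚ(ζ_p), the p-th cyclotomic field. -/

import Mathlib

/-- An irreducible complex character of a group `G`: the trace character of some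
irreducible (simple) finite-dimensional complex representation of `G`. -/
def IsIrredCharacter {G : Type} [Monoid G] (χ : G → ℂ) : Prop :=
  ∃ V : FDRep ℂ G, CategoryTheory.Simple V ∧ V.character = χ

open scoped Classical in
/-- The class function on `G` induced from a function `ψ` on a subgroup `H`:
`ψ^G(g) = |H|⁻¹ · ∑_{x ∈ G} ψ°(x g x⁻¹)`, where `ψ°` is `ψ` on `H` and `0` off `H`. -/
noncomputable def inducedFn {G : Type} [Group G] (H : Subgroup G) (ψ : H → ℂ) : G → ℂ :=
  fun g => (Nat.card H : ℂ)⁻¹ *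
    ∑ᶠ x : G, if h : x * g * x⁻¹ ∈ H then ψ ⟨x * g * x⁻¹, h⟩ else 0

/-- `(G, Z(G))` is a Camina pair: `1 < Z(G) < G` and every `g ∉ Z(G)` is conjugate to
every element of the coset `g·Z(G)`. -/
def IsCaminaPairCenter (G : Type) [Group G] : Prop :=
  ⊥ < Subgroup.center G ∧ Subgroup.center G < (⊤ : Subgroup G) ∧
    ∀ g : G, g ∉ Subgroup.center G → ∀ z ∈ Subgroup.center G, IsConj g (g * z)

section Aux
open CategoryTheory
variable {G : Type} [Group G] [Fintype G]

lemma hom_app {G : Type} [Group G] (X Y : FDRep ℂ G) (f : Y ⟶ X) (g : G) (y : ↑Y.V) :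
    f.hom (Y.ρ g y) = X.ρ g (f.hom y) := by
  have := congrArg (fun φ : Y.V ⟶ X.V => (ConcreteCategory.hom φ : Y →ₗ[ℂ] X) y) (f.comm g)
  exact this

lemma fdrep_simple_of {G : Type} [Group G] (X : FDRep ℂ G) (hnz : ∃ v : X, v ≠ 0)
    (hmin : ∀ p : Submodule ℂ X, (∀ g : G, ∀ v ∈ p, X.ρ g v ∈ p) → p = ⊥ ∨ p = ⊤) :
    Simple X := by
  constructor
  intro Y f hmono
  constructor
  · intro hiso hf0
    subst hf0
    obtain ⟨v, hv⟩ := hnz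
    have h1 : 𝟙 X = (0 : X ⟶ X) := by
      rw [← IsIso.inv_hom_id (0 : Y ⟶ X), Limits.comp_zero]
    apply hv
    have h2 : ((𝟙 X : X ⟶ X).hom : X → X) v = ((0 : X ⟶ X).hom : X → X) v := by rw [h1]
    exact h2
  · intro hf
    have hinj : Function.Injective f.hom := by
      rw [← LinearMap.ker_eq_bot]
      set K := LinearMap.ker (ConcreteCategory.hom f.hom : Y →ₗ[ℂ] X) with hK
      have hKinv : ∀ g : G, ∀ v ∈ K, Y.ρ g v ∈ K := by
        intro g v hv
        have hv' : f.hom v = 0 := hv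
        have h2 : f.hom (Y.ρ g v) = X.ρ g (f.hom v) := hom_app X Y f g v
        have h3 : f.hom (Y.ρ g v) = 0 := by rw [h2, hv', map_zero]
        exact h3
      let ρK : Representation ℂ G K :=
        { toFun := fun g => (Y.ρ g).restrict (hKinv g)
          map_one' := by
            ext v
            simp [LinearMap.restrict_apply]
          map_mul' := by
            intro g h
            ext v
            show (Y.ρ (g * h)) (v : ↑Y.V) = Y.ρ g (Y.ρ h (v : ↑Y.V))
            rw [map_mul]
            rfl }
      let Z : FDRep ℂ G := FDRep.of ρK
      let ι : Z ⟶ Y := ⟨FGModuleCat.ofHom K.subtype, by intro g; rfl⟩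
      have hz : ι ≫ f = 0 := by
        refine Action.Hom.ext ?_
        refine ConcreteCategory.ext (LinearMap.ext fun v => ?_)
        show f.hom (K.subtype v) = _
        have : f.hom (K.subtype v) = 0 := v.2
        rw [this]; rfl
      have hcomp : ι ≫ f = (0 : Z ⟶ Y) ≫ f := by rw [hz, Limits.zero_comp]
      have hι : ι = 0 := Mono.right_cancellation _ _ hcomp
      ext v
      constructor
      · intro hv
        have h3 : K.subtype ⟨v, hv⟩ = (0 : Z ⟶ Y).hom ⟨v, hv⟩ := by rw [← hι]; rfl
        exact h3
      · intro hv; simp only [Submodule.mem_bot] at hv; subst hv; exact K.zero_mem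
    have hsurj : Function.Surjective f.hom := by
      rw [← LinearMap.range_eq_top]
      have hinvr : ∀ g : G, ∀ v ∈ LinearMap.range (ConcreteCategory.hom f.hom : Y →ₗ[ℂ] X), X.ρ g v ∈ LinearMap.range (ConcreteCategory.hom f.hom : Y →ₗ[ℂ] X) := by
        rintro g v ⟨y, rfl⟩
        exact ⟨Y.ρ g y, hom_app X Y f g y⟩
      rcases hmin _ hinvr with h | h
      · exfalso; apply hf
        refine Action.Hom.ext ?_
        refine ConcreteCategory.ext (LinearMap.ext fun y => ?_)
        have hy : f.hom y ∈ LinearMap.range (ConcreteCategory.hom f.hom : Y →ₗ[ℂ] X) := LinearMap.mem_range_self _ y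
        rw [h, Submodule.mem_bot] at hy
        simp only [Action.zero_hom, LinearMap.zero_apply]
        show f.hom y = 0
        exact hy
      · exact h
    let e : Y ≃ₗ[ℂ] X := LinearEquiv.ofBijective (ConcreteCategory.hom f.hom : Y →ₗ[ℂ] X) ⟨hinj, hsurj⟩
    refine ⟨⟨Action.Hom.mk (FGModuleCat.ofHom e.symm.toLinearMap) ?_, ?_, ?_⟩⟩
    · intro g
      refine ConcreteCategory.ext (LinearMap.ext fun x => ?_)
      apply hinj
      show f.hom (e.symm (X.ρ g x)) = f.hom (Y.ρ g (e.symm x))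
      rw [hom_app X Y f g (e.symm x)]
      have h1 : ∀ w : X, f.hom (e.symm w) = w := fun w => e.apply_symm_apply w
      rw [h1, h1]
    · refine Action.Hom.ext (ConcreteCategory.ext (LinearMap.ext fun y => ?_))
      show e.symm (f.hom y) = y
      exact e.symm_apply_apply y
    · refine Action.Hom.ext (ConcreteCategory.ext (LinearMap.ext fun x => ?_))
      show f.hom (e.symm x) = x
      exact e.apply_symm_apply x

variable {G : Type} [Group G] [Fintype G]

def rhoF (G : Type) [Group G] : Representation ℂ G (G → ℂ) where
  toFun g :=
    { toFun := fun f x => f (x * g)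
      map_add' := fun a b => rfl
      map_smul' := fun c a => rfl }
  map_one' := by ext f x; simp
  map_mul' := by intro g h; ext f x; simp [mul_assoc]

lemma exists_simple_scalar (μ : ↥(Subgroup.center G) →* ℂ) :
    ∃ X : FDRep ℂ G, Simple X ∧ 0 < Module.finrank ℂ X ∧
      ∀ z : ↥(Subgroup.center G), X.ρ ↑z = (μ z) • (LinearMap.id (R := ℂ) (M := X)) := by
  classical
  set W : Submodule ℂ (G → ℂ) :=
    { carrier := {f | ∀ z : ↥(Subgroup.center G), ∀ x : G, f (↑z * x) = μ z * f x}
      add_mem' := by intro a b ha hb z x; simp [ha z x, hb z x, mul_add]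
      zero_mem' := by intro z x; simp
      smul_mem' := by intro c a ha z x; simp [ha z x]; ring } with hWdef
  have hWinv : ∀ g : G, ∀ f ∈ W, rhoF G g f ∈ W := by
    intro g f hf z x
    show f ((↑z * x) * g) = μ z * f (x * g)
    rw [mul_assoc]
    exact hf z (x * g)
  have hWne : W ≠ ⊥ := by
    intro hbot
    have hf0 : (fun x : G => if h : x ∈ Subgroup.center G then μ ⟨x, h⟩ else 0) ∈ W := by
      intro z x
      dsimp only
      by_cases hx : x ∈ Subgroup.center G
      · have hzx : (↑z * x) ∈ Subgroup.center G := mul_mem z.2 hx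
        rw [dif_pos hx, dif_pos hzx]
        rw [show (⟨↑z * x, hzx⟩ : ↥(Subgroup.center G)) = z * ⟨x, hx⟩ from rfl, map_mul]
      · have hzx : (↑z * x) ∉ Subgroup.center G := by
          intro hmem
          exact hx (by simpa using mul_mem (inv_mem z.2) hmem)
        rw [dif_neg hzx, dif_neg hx, mul_zero]
    rw [hbot, Submodule.mem_bot] at hf0
    have h1 := congrFun hf0 1
    rw [dif_pos (one_mem (Subgroup.center G))] at h1
    rw [show (⟨(1:G), one_mem _⟩ : ↥(Subgroup.center G)) = 1 from rfl, map_one] at h1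
    exact one_ne_zero h1
  -- the set of candidate submodules
  set S𝒮 : Set (Submodule ℂ (G → ℂ)) :=
    {q | q ≤ W ∧ q ≠ ⊥ ∧ ∀ g : G, ∀ f ∈ q, rhoF G g f ∈ q} with hSdef
  have hWS : W ∈ S𝒮 := ⟨le_rfl, hWne, hWinv⟩
  set ranks : Set ℕ := (fun q : Submodule ℂ (G → ℂ) => Module.finrank ℂ q) '' S𝒮 with hrdef
  have hrne : ranks.Nonempty := ⟨_, W, hWS, rfl⟩
  obtain ⟨S, hS, hSrank⟩ : ∃ q ∈ S𝒮, Module.finrank ℂ q = sInf ranks := Nat.sInf_mem hrne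
  have hSmin : ∀ q ∈ S𝒮, Module.finrank ℂ S ≤ Module.finrank ℂ q := by
    intro q hq
    rw [hSrank]
    exact Nat.sInf_le ⟨q, hq, rfl⟩
  obtain ⟨hSW, hSne, hSinv⟩ := hS
  -- representation on S
  let ρS : Representation ℂ G S :=
    { toFun := fun g => (rhoF G g).restrict (fun f hf => hSinv g f hf)
      map_one' := LinearMap.ext fun v => Subtype.ext (by
        show (rhoF G) 1 (v : G → ℂ) = _
        rw [map_one]
        rfl)
      map_mul' := fun g h => LinearMap.ext fun v => Subtype.ext (by
        show (rhoF G) (g * h) (v : G → ℂ) = _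
        rw [map_mul]
        rfl) }
  obtain ⟨x0, hx0S, hx00⟩ := Submodule.ne_bot_iff S |>.mp hSne
  refine ⟨FDRep.of ρS, ?_, ?_, ?_⟩
  · apply fdrep_simple_of
    · exact ⟨⟨x0, hx0S⟩, fun h => hx00 (congrArg Subtype.val h)⟩
    · intro p hp
      by_cases hpbot : p = ⊥
      · exact Or.inl hpbot
      refine Or.inr ?_
      set q := Submodule.map S.subtype p with hqdef
      have hq_le : q ≤ S := Submodule.map_subtype_le S p
      have hqS : q ∈ S𝒮 := by
        refine ⟨le_trans hq_le hSW, ?_, ?_⟩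
        · obtain ⟨v, hvp, hv0⟩ := Submodule.ne_bot_iff p |>.mp hpbot
          refine Submodule.ne_bot_iff q |>.mpr ⟨_, Submodule.mem_map_of_mem hvp, ?_⟩
          intro h
          exact hv0 (Subtype.ext h)
        · rintro g f ⟨v, hv, rfl⟩
          exact ⟨_, hp g v hv, rfl⟩
      have hqeq : q = S := Submodule.eq_of_le_of_finrank_le hq_le (hSmin q hqS)
      have h2 : Submodule.map S.subtype p = Submodule.map S.subtype ⊤ := by
        rw [Submodule.map_subtype_top]
        exact hqeq
      exact Submodule.map_injective_of_injective S.injective_subtype h2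
  · have : Nontrivial ↥S := ⟨⟨⟨x0, hx0S⟩, 0, fun h => hx00 (congrArg Subtype.val h)⟩⟩
    exact Module.finrank_pos_iff.mpr this
  · intro z
    refine LinearMap.ext fun (v : ↥S) => Subtype.ext ?_
    show (rhoF G) ↑z (v : G → ℂ) = _
    have hval : (rhoF G) ↑z (v : G → ℂ) = μ z • (v : G → ℂ) := by
      funext x
      show (v : G → ℂ) (x * ↑z) = μ z * (v : G → ℂ) x
      rw [Subgroup.mem_center_iff.mp z.2 x]
      exact hSW v.2 z x
    rw [hval]
    rfl

variable {G : Type} [Group G] [Fintype G]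

lemma char_scal (X : FDRep ℂ G) (c : ℂ) (g : G)
    (h : X.ρ g = c • (LinearMap.id (R := ℂ) (M := X))) :
    X.character g = c * (Module.finrank ℂ X) := by
  show LinearMap.trace ℂ X (X.ρ g) = _
  rw [h, map_smul, LinearMap.trace_id, smul_eq_mul]

lemma char_zero_off (X : FDRep ℂ G) (g : G) (z : G) (ζ : ℂ) (hz1 : ζ ≠ 1)
    (hscal : X.ρ z = ζ • (LinearMap.id (R := ℂ) (M := X)))
    (hconj : IsConj g (g * z)) : X.character g = 0 := by
  obtain ⟨c, hc⟩ := isConj_iff.mp hconj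
  have h1 : X.character (g * z) = X.character g := by
    rw [← hc, FDRep.char_conj]
  have h2 : X.character (g * z) = ζ * X.character g := by
    show LinearMap.trace ℂ X (X.ρ (g * z)) = _
    rw [map_mul, hscal, mul_smul_comm, map_smul, smul_eq_mul]
    rfl
  have h3 : (ζ - 1) * X.character g = 0 := by
    rw [sub_mul, one_mul, ← h2, h1, sub_self]
  rcases mul_eq_zero.mp h3 with h | h
  · exact absurd (sub_eq_zero.mp h) hz1
  · exact h

lemma char_norm_one (X : FDRep ℂ G) [Simple X] :
    ((Fintype.card G : ℂ))⁻¹ * ∑ g : G, X.character g * X.character g⁻¹ = 1 := by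
  have h := FDRep.char_orthonormal (k := ℂ) (G := G) X X
  rw [if_pos ⟨Iso.refl X⟩, Nat.card_eq_fintype_card] at h
  exact h

end Aux

open scoped commutatorElement in
set_option maxHeartbeats 1000000 in
theorem stmt_18 {p : ℕ} (hp : p.Prime) (hp5 : 5 ≤ p)
    {G : Type} [Group G] [Fintype G]
    (hcard : Nat.card G = p ^ 5)
    (hcp : IsCaminaPairCenter G)
    (hZ : Nat.card (Subgroup.center G) = p)
    (hG'card : Nat.card (commutator G) = p ^ 3)
    (hG'ab : ∀ a ∈ commutator G, ∀ b ∈ commutator G, a * b = b * a)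
    (hG'exp : ∀ a ∈ commutator G, a ^ p = 1)
    (μ : ↥(Subgroup.center G) →* ℂ) (hμ : ∃ z, μ z ≠ 1)
    (ψ : ↥(commutator G) →* ℂ)
    (hres : ∀ (z : G) (hz : z ∈ Subgroup.center G) (hz' : z ∈ commutator G),
      ψ ⟨z, hz'⟩ = μ ⟨z, hz⟩) :
    IsIrredCharacter (inducedFn (commutator G) fun h => ψ h) ∧
    (inducedFn (commutator G) fun h => ψ h) 1 = (p : ℂ) ^ 2 ∧
    (∀ g (hg : g ∈ Subgroup.center G),
      (inducedFn (commutator G) fun h => ψ h) g = (p : ℂ) ^ 2 * μ ⟨g, hg⟩) ∧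
    (∀ g ∉ Subgroup.center G, (inducedFn (commutator G) fun h => ψ h) g = 0) ∧
    ∃ ζ : ℂ, IsPrimitiveRoot ζ p ∧
      IntermediateField.adjoin ℚ (Set.range fun h => ψ h) =
        IntermediateField.adjoin ℚ {ζ} ∧
      IntermediateField.adjoin ℚ (Set.range (inducedFn (commutator G) fun h => ψ h)) =
        IntermediateField.adjoin ℚ {ζ} := by
  classical
  obtain ⟨hbot, hlt, hcam⟩ := hcp
  have hp0 : (p : ℂ) ≠ 0 := Nat.cast_ne_zero.mpr hp.pos.ne'
  haveI : NeZero p := ⟨hp.pos.ne'⟩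
  obtain ⟨z₀, hz₀⟩ := hμ
  set ζ : ℂ := μ z₀ with hζdef
  -- center ≤ commutator
  have hZle : Subgroup.center G ≤ commutator G := by
    intro z hz
    obtain ⟨g, -, hg⟩ := SetLike.exists_of_lt hlt
    obtain ⟨c, hc⟩ := isConj_iff.mp (hcam g hg z hz)
    have hzeq : z = ⁅g⁻¹, c⁆ := by
      have : z = g⁻¹ * (c * g * c⁻¹) := by rw [hc]; group
      rw [this, commutatorElement_def]; group
    rw [hzeq]
    exact Subgroup.commutator_mem_commutator (Subgroup.mem_top _) (Subgroup.mem_top _)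
  -- ζ is a primitive p-th root of unity
  have hzp : ∀ z : ↥(Subgroup.center G), z ^ p = 1 := by
    intro z; rw [← hZ]; exact pow_card_eq_one'
  have hζp : ζ ^ p = 1 := by rw [hζdef, ← map_pow, hzp z₀, map_one]
  have hζ1 : ζ ≠ 1 := hz₀
  have hprim : IsPrimitiveRoot ζ p := by
    have horder : orderOf ζ ∣ p := orderOf_dvd_of_pow_eq_one hζp
    rcases hp.eq_one_or_self_of_dvd _ horder with h | h
    · exact absurd (orderOf_eq_one_iff.mp h) hζ1
    · have h2 := IsPrimitiveRoot.orderOf ζ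
      rw [h] at h2; exact h2
  -- value of ψ at z₀
  have hψz₀ : ψ ⟨↑z₀, hZle z₀.2⟩ = ζ := by
    rw [hres ↑z₀ z₀.2 (hZle z₀.2)]
  -- general formula for inducedFn as a finite sum
  have hind : ∀ g : G, inducedFn (commutator G) (fun h => ψ h) g =
      ((p : ℂ) ^ 3)⁻¹ * ∑ x : G,
        (if h : x * g * x⁻¹ ∈ commutator G then ψ ⟨x * g * x⁻¹, h⟩ else 0) := by
    intro g
    unfold inducedFn
    rw [finsum_eq_sum_of_fintype, hG'card]
    push_cast
    ring_nf
  -- inducedFn on the center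
  have hInd_center : ∀ g, ∀ hg : g ∈ Subgroup.center G,
      inducedFn (commutator G) (fun h => ψ h) g = (p : ℂ) ^ 2 * μ ⟨g, hg⟩ := by
    intro g hg
    rw [hind g]
    have hterm : ∀ x : G,
        (if h : x * g * x⁻¹ ∈ commutator G then ψ ⟨x * g * x⁻¹, h⟩ else 0) = μ ⟨g, hg⟩ := by
      intro x
      have hx : x * g * x⁻¹ = g := by
        rw [show x * g = g * x from (Subgroup.mem_center_iff.mp hg x)]
        group
      simp only [hx]
      rw [dif_pos (hZle hg)]
      exact hres g hg (hZle hg)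
    rw [Finset.sum_congr rfl (fun x _ => hterm x), Finset.sum_const, Finset.card_univ]
    have hcardG : Fintype.card G = p ^ 5 := by rw [← Nat.card_eq_fintype_card]; exact hcard
    rw [hcardG, nsmul_eq_mul]
    push_cast
    field_simp
  -- inducedFn off the center
  have hInd_zero : ∀ g ∉ Subgroup.center G, inducedFn (commutator G) (fun h => ψ h) g = 0 := by
    intro g hg
    rw [hind g]
    obtain ⟨c, hc⟩ := isConj_iff.mp (hcam g hg ↑z₀ z₀.2)
    set t : G → ℂ := fun x =>
      (if h : x * g * x⁻¹ ∈ commutator G then ψ ⟨x * g * x⁻¹, h⟩ else 0) with ht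
    have hstep : ∀ x : G, t (x * c) = ζ * t x := by
      intro x
      have h1 : x⁻¹ * ↑z₀ = ↑z₀ * x⁻¹ := Subgroup.mem_center_iff.mp z₀.2 x⁻¹
      have key : (x * c) * g * (x * c)⁻¹ = (x * g * x⁻¹) * ↑z₀ := by
        calc (x * c) * g * (x * c)⁻¹ = x * (c * g * c⁻¹) * x⁻¹ := by group
        _ = x * (g * ↑z₀) * x⁻¹ := by rw [hc]
        _ = x * g * (↑z₀ * x⁻¹) := by group
        _ = x * g * (x⁻¹ * ↑z₀) := by rw [← h1]
        _ = (x * g * x⁻¹) * ↑z₀ := by group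
      by_cases hm : x * g * x⁻¹ ∈ commutator G
      · have hm2 : (x * c) * g * (x * c)⁻¹ ∈ commutator G := by
          rw [key]; exact mul_mem hm (hZle z₀.2)
        rw [ht]
        simp only []
        rw [dif_pos hm2, dif_pos hm]
        have heq : (⟨(x * c) * g * (x * c)⁻¹, hm2⟩ : ↥(commutator G)) =
            ⟨x * g * x⁻¹, hm⟩ * ⟨↑z₀, hZle z₀.2⟩ := Subtype.ext key
        rw [heq, map_mul, hψz₀]
        ring
      · have hm2 : ¬ ((x * c) * g * (x * c)⁻¹ ∈ commutator G) := by
          rw [key]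
          intro hmem
          exact hm ((mul_mem_cancel_right (hZle z₀.2)).mp hmem)
        rw [ht]
        simp only []
        rw [dif_neg hm2, dif_neg hm, mul_zero]
    have hsum0 : ∑ x : G, t x = 0 := by
      have h2 : ∑ x : G, t (x * c) = ∑ x : G, t x := by
        exact Equiv.sum_comp (Equiv.mulRight c) t
      have h3 : ∑ x : G, t (x * c) = ζ * ∑ x : G, t x := by
        rw [Finset.sum_congr rfl (fun x _ => hstep x), Finset.mul_sum]
      have h4 : (1 - ζ) * ∑ x : G, t x = 0 := by
        rw [sub_mul, one_mul, ← h3, h2, sub_self]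
      rcases mul_eq_zero.mp h4 with h | h
      · exact absurd (by linear_combination -h : ζ = 1) hζ1
      · exact h
    rw [hsum0, mul_zero]
  -- the simple representation
  obtain ⟨X, hXsimple, hXpos, hXscal⟩ := exists_simple_scalar (G := G) μ
  haveI := hXsimple
  set d : ℕ := Module.finrank ℂ X with hd
  have hχc : ∀ z : ↥(Subgroup.center G), X.character ↑z = μ z * d :=
    fun z => char_scal X (μ z) ↑z (hXscal z)
  have hχ0 : ∀ g ∉ Subgroup.center G, X.character g = 0 := fun g hg =>
    char_zero_off X g ↑z₀ ζ hζ1 (hXscal z₀) (hcam g hg ↑z₀ z₀.2)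
  -- determine d
  have hsum2 : ∑ g : G, X.character g * X.character g⁻¹ = (p : ℂ) * (d : ℂ) ^ 2 := by
    have hterm : ∀ g : G, X.character g * X.character g⁻¹ =
        if g ∈ Subgroup.center G then (d : ℂ) ^ 2 else 0 := by
      intro g
      by_cases hg : g ∈ Subgroup.center G
      · rw [if_pos hg]
        have h1 := hχc ⟨g, hg⟩
        have h2 := hχc ⟨g, hg⟩⁻¹
        rw [show ((⟨g, hg⟩⁻¹ : ↥(Subgroup.center G)) : G) = g⁻¹ from rfl] at h2
        rw [h1, h2]
        have h3 : μ ⟨g, hg⟩ * μ (⟨g, hg⟩⁻¹) = 1 := by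
          rw [← map_mul, mul_inv_cancel, map_one]
        calc μ ⟨g, hg⟩ * ↑d * (μ (⟨g, hg⟩⁻¹) * ↑d)
            = (μ ⟨g, hg⟩ * μ (⟨g, hg⟩⁻¹)) * ((d : ℂ) ^ 2) := by ring
        _ = (d : ℂ) ^ 2 := by rw [h3, one_mul]
      · rw [if_neg hg, hχ0 g hg, zero_mul]
    rw [Finset.sum_congr rfl (fun g _ => hterm g), ← Finset.sum_filter, Finset.sum_const]
    have hcardZ : (Finset.univ.filter (fun g : G => g ∈ Subgroup.center G)).card = p := by
      rw [← Fintype.card_subtype, ← Nat.card_eq_fintype_card]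
      exact hZ
    rw [hcardZ, nsmul_eq_mul]
  have hdp : d = p ^ 2 := by
    have horto := char_norm_one X
    have hcardG : Fintype.card G = p ^ 5 := by rw [← Nat.card_eq_fintype_card]; exact hcard
    rw [hsum2, hcardG] at horto
    have hd2 : ((d : ℂ)) ^ 2 = (p : ℂ) ^ 4 := by
      have h5 : ((p : ℂ) ^ 5)⁻¹ * ((p : ℂ) * (d : ℂ) ^ 2) = 1 := by exact_mod_cast horto
      field_simp at h5
      have := h5
      -- p * d^2 = p^5
      have h6 : (d : ℂ) ^ 2 * (p:ℂ) = (p : ℂ) ^ 4 * (p:ℂ) := by ring_nf; ring_nf at this; linear_combination (p:ℂ) * this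
      exact mul_right_cancel₀ hp0 h6
    have hd2n : d ^ 2 = p ^ 4 := by exact_mod_cast hd2
    have : d ^ 2 = (p ^ 2) ^ 2 := by rw [hd2n]; ring
    exact Nat.pow_left_injective (by norm_num) this
  -- character equals inducedFn
  have hchar : X.character = inducedFn (commutator G) (fun h => ψ h) := by
    funext g
    by_cases hg : g ∈ Subgroup.center G
    · rw [hInd_center g hg]
      have := hχc ⟨g, hg⟩
      rw [this, hdp]
      push_cast
      ring
    · rw [hχ0 g hg, hInd_zero g hg]
  refine ⟨⟨X, hXsimple, hchar⟩, ?_, hInd_center, hInd_zero, ?_⟩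
  · rw [hInd_center 1 (one_mem _)]
    rw [show (⟨(1:G), one_mem _⟩ : ↥(Subgroup.center G)) = 1 from rfl, map_one, mul_one]
  · refine ⟨ζ, hprim, ?_, ?_⟩
    · apply le_antisymm
      · rw [IntermediateField.adjoin_le_iff]
        rintro - ⟨h, rfl⟩
        have hpow : (ψ h) ^ p = 1 := by
          rw [← map_pow]
          have : h ^ p = 1 := by
            refine Subtype.ext ?_
            exact hG'exp ↑h h.2
          rw [this, map_one]
        obtain ⟨i, -, hi⟩ := hprim.eq_pow_of_pow_eq_one hpow
        show ψ h ∈ _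
        rw [← hi]
        exact pow_mem (IntermediateField.mem_adjoin_simple_self ℚ ζ) i
      · rw [IntermediateField.adjoin_le_iff]
        intro x hx
        rw [Set.mem_singleton_iff] at hx
        subst hx
        exact IntermediateField.subset_adjoin _ _ ⟨⟨↑z₀, hZle z₀.2⟩, hψz₀⟩
    · have hp2mem : ((p : ℂ)) ^ 2 ∈ IntermediateField.adjoin ℚ {ζ} := by
        have h1 := IntermediateField.algebraMap_mem (IntermediateField.adjoin ℚ {ζ}) ((p : ℚ) ^ 2)
        have h2 : (algebraMap ℚ ℂ) ((p : ℚ) ^ 2) = ((p : ℂ)) ^ 2 := by push_cast; ring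
        rwa [h2] at h1
      apply le_antisymm
      · rw [IntermediateField.adjoin_le_iff]
        rintro - ⟨g, rfl⟩
        by_cases hg : g ∈ Subgroup.center G
        · rw [hInd_center g hg]
          have hpow : (μ ⟨g, hg⟩) ^ p = 1 := by
            rw [← map_pow, hzp ⟨g, hg⟩, map_one]
          obtain ⟨i, -, hi⟩ := hprim.eq_pow_of_pow_eq_one hpow
          rw [← hi]
          exact mul_mem hp2mem (pow_mem (IntermediateField.mem_adjoin_simple_self ℚ ζ) i)
        · rw [hInd_zero g hg]
          exact zero_mem _
      · rw [IntermediateField.adjoin_le_iff]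
        intro x hx
        rw [Set.mem_singleton_iff] at hx
        subst hx
        have hv : inducedFn (commutator G) (fun h => ψ h) ↑z₀ = (p : ℂ) ^ 2 * ζ := by
          rw [hInd_center ↑z₀ z₀.2]
        have hmem : (p : ℂ) ^ 2 * ζ ∈ IntermediateField.adjoin ℚ
            (Set.range (inducedFn (commutator G) fun h => ψ h)) := by
          rw [← hv]
          exact IntermediateField.subset_adjoin _ _ ⟨↑z₀, rfl⟩
        have hp2mem' : ((p : ℂ)) ^ 2 ∈ IntermediateField.adjoin ℚ
            (Set.range (inducedFn (commutator G) fun h => ψ h)) := by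
          have h1 := IntermediateField.algebraMap_mem (IntermediateField.adjoin ℚ
            (Set.range (inducedFn (commutator G) fun h => ψ h))) ((p : ℚ) ^ 2)
          have h2 : (algebraMap ℚ ℂ) ((p : ℚ) ^ 2) = ((p : ℂ)) ^ 2 := by push_cast; ring
          rwa [h2] at h1
        have : ζ = ((p : ℂ) ^ 2)⁻¹ * ((p : ℂ) ^ 2 * ζ) := by
          field_simp
        rw [this]
        exact mul_mem (inv_mem hp2mem') hmem
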